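/- Let f : Ω → ℝ and λ : Ω → (0,∞) be bounded and uniformly continuous (with respect to the sup-norm on ℝ²), let w : Ω → (0,∞) be bounded, and assume E(x,y) ⊆ Ω for all (x,y) ∈ Ω. Fix an integer N ≥ 1 and a real p with 1 ≤ p < ∞. Then the persistence-surface map is uniformly continuous on Ω^N with respect to W_p: for every ε > 0 there exists δ > 0 such that for all D, D' ∈ Ω^N with W_p(D,D') < δ one has ‖f̃ρ(D) − f̃ρ(D')‖_{L²(w dA)} < ε. -/

import Mathlib

open MeasureTheory Real

noncomputable section
set_option maxHeartbeats 1000000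

/-- The open first quadrant. -/
def Omega : Set (ℝ × ℝ) := {p | 0 < p.1 ∧ 0 < p.2}

/-- The closed axis-aligned square centered at `p` with side length `l`. -/
def sqr (l : ℝ) (p : ℝ × ℝ) : Set (ℝ × ℝ) :=
  Set.Icc (p.1 - l / 2) (p.1 + l / 2) ×ˢ Set.Icc (p.2 - l / 2) (p.2 + l / 2)

/-- The square `E(p)` associated to a length function `lam`. -/
def sqE (lam : ℝ × ℝ → ℝ) (p : ℝ × ℝ) : Set (ℝ × ℝ) := sqr (lam p) p

/-- The persistence surface of the diagram `D`. -/
def surf (f lam : ℝ × ℝ → ℝ) {N : ℕ} (D : Fin N → ℝ × ℝ) (z : ℝ × ℝ) : ℝ :=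
  ∑ n, f (D n) * Set.indicator (sqE lam (D n)) 1 z

/-- The identification `ρ(D)` of a persistence diagram as a function. -/
def rho (lam : ℝ × ℝ → ℝ) {N : ℕ} (D : Fin N → ℝ × ℝ) (z : ℝ × ℝ) : ℝ :=
  ∑ n, Set.indicator (sqE lam (D n)) 1 z

/-- The `L²(w dA)` norm, the integral taken over `Omega`. -/
def l2norm (w g : ℝ × ℝ → ℝ) : ℝ :=
  Real.sqrt (∫ z in Omega, (g z) ^ 2 * w z)

/-- The `p`-Wasserstein distance between two `N`-point diagrams (sup-norm ground metric). -/
def Wp (p : ℝ) {N : ℕ} (D D' : Fin N → ℝ × ℝ) : ℝ :=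
  ⨅ σ : Equiv.Perm (Fin N), (∑ n, ‖D n - D' (σ n)‖ ^ p) ^ (1 / p)

/-- The `1/2`-Wasserstein distance (no outer power). -/
def Whalf {N : ℕ} (D D' : Fin N → ℝ × ℝ) : ℝ :=
  ⨅ σ : Equiv.Perm (Fin N), ∑ n, ‖D n - D' (σ n)‖ ^ ((1 : ℝ) / 2)

/-- The `1`-Wasserstein distance. -/
def W1 {N : ℕ} (D D' : Fin N → ℝ × ℝ) : ℝ :=
  ⨅ σ : Equiv.Perm (Fin N), ∑ n, ‖D n - D' (σ n)‖

/-- The persistence image value `I_S(D) = ∫_S f̃ρ(D) w dA`. -/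
def Ipix (f lam w : ℝ × ℝ → ℝ) {N : ℕ} (D : Fin N → ℝ × ℝ) (S : Set (ℝ × ℝ)) : ℝ :=
  ∫ z in S, surf f lam D z * w z

/-- `‖f‖_∞ = sup_Ω |f|`. -/
def supAbs (f : ℝ × ℝ → ℝ) : ℝ := ⨆ p : Omega, |f p.val|

/-- `‖λ‖_∞ = sup_Ω λ`. -/
def supLam (lam : ℝ × ℝ → ℝ) : ℝ := ⨆ p : Omega, lam p.val

lemma measOmega : MeasurableSet Omega := by
  have : Omega = Set.Ioi (0:ℝ) ×ˢ Set.Ioi (0:ℝ) := by ext p; simp [Omega, Set.mem_prod]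
  rw [this]; exact measurableSet_Ioi.prod measurableSet_Ioi

lemma sqr_meas (l : ℝ) (p : ℝ × ℝ) : MeasurableSet (sqr l p) :=
  measurableSet_Icc.prod measurableSet_Icc

lemma sqr_vol (l : ℝ) (p : ℝ × ℝ) :
    (volume (sqr l p)).toReal = max l 0 ^ 2 := by
  rw [sqr, Measure.volume_eq_prod, Measure.prod_prod, Real.volume_Icc, Real.volume_Icc]
  have h1 : p.1 + l/2 - (p.1 - l/2) = l := by ring
  have h2 : p.2 + l/2 - (p.2 - l/2) = l := by ring
  rw [h1, h2, ENNReal.toReal_mul]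
  rcases le_total 0 l with h | h
  · rw [ENNReal.toReal_ofReal h, max_eq_left h]; ring
  · rw [ENNReal.ofReal_of_nonpos h, max_eq_right h]; simp

lemma sqr_vol_top (l : ℝ) (p : ℝ × ℝ) : volume (sqr l p) < ⊤ := by
  rw [sqr, Measure.volume_eq_prod, Measure.prod_prod, Real.volume_Icc, Real.volume_Icc]
  exact ENNReal.mul_lt_top ENNReal.ofReal_lt_top ENNReal.ofReal_lt_top

lemma integrable_ind {S : Set (ℝ×ℝ)} (hS : MeasurableSet S) (hv : volume S < ⊤) :
    Integrable (fun z => Set.indicator S (1 : (ℝ×ℝ)→ℝ) z) volume := by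
  have h : (fun z => Set.indicator S (1 : (ℝ×ℝ)→ℝ) z) = Set.indicator S (fun _ => (1:ℝ)) := rfl
  rw [h, integrable_indicator_iff hS]
  exact (integrableOn_const_iff (by simp)).mpr (Or.inr hv)

lemma integral_ind {S : Set (ℝ×ℝ)} (hS : MeasurableSet S) :
    ∫ z, Set.indicator S (1 : (ℝ×ℝ)→ℝ) z = (volume S).toReal := by
  have h : (fun z => Set.indicator S (1 : (ℝ×ℝ)→ℝ) z) = Set.indicator S (fun _ => (1:ℝ)) := rfl
  rw [h, integral_indicator_const (1:ℝ) hS]; simp; rfl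

lemma ind_diff {Oo Ii : Set (ℝ×ℝ)} (h : Ii ⊆ Oo) (z : ℝ×ℝ) :
    Set.indicator (Oo \ Ii) (1 : (ℝ×ℝ)→ℝ) z
      = Set.indicator Oo (1:(ℝ×ℝ)→ℝ) z - Set.indicator Ii (1:(ℝ×ℝ)→ℝ) z := by
  by_cases hI : z ∈ Ii
  · have hO : z ∈ Oo := h hI
    simp [Set.indicator_apply, Set.mem_diff, hI, hO]
  · by_cases hO : z ∈ Oo <;> simp [Set.indicator_apply, Set.mem_diff, hI, hO]

lemma sqr_subset {l l' : ℝ} {p q : ℝ × ℝ}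
    (h1 : q.1 - l'/2 ≤ p.1 - l/2) (h2 : p.1 + l/2 ≤ q.1 + l'/2)
    (h3 : q.2 - l'/2 ≤ p.2 - l/2) (h4 : p.2 + l/2 ≤ q.2 + l'/2) :
    sqr l p ⊆ sqr l' q :=
  Set.prod_mono (Set.Icc_subset_Icc h1 h2) (Set.Icc_subset_Icc h3 h4)

lemma ind01 (S : Set (ℝ×ℝ)) (z : ℝ×ℝ) :
    Set.indicator S (1 : (ℝ×ℝ)→ℝ) z = 0 ∨ Set.indicator S (1 : (ℝ×ℝ)→ℝ) z = 1 := by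
  by_cases h : z ∈ S <;> simp [Set.indicator_apply, h]

lemma ind_nonneg (S : Set (ℝ×ℝ)) (z : ℝ×ℝ) : 0 ≤ Set.indicator S (1 : (ℝ×ℝ)→ℝ) z :=
  Set.indicator_nonneg (fun _ _ => zero_le_one) z


/-- uniform continuity of the persistence-surface map on `Ω^N`
with respect to `W_p`, under boundedness and uniform continuity of `f` and `λ`
and boundedness of `w`. -/
theorem stmt7 (f lam w : ℝ × ℝ → ℝ)
    (hfb : ∃ C : ℝ, ∀ q ∈ Omega, |f q| ≤ C)
    (hfu : ∀ ε > 0, ∃ δ > 0, ∀ q ∈ Omega, ∀ q' ∈ Omega, ‖q - q'‖ < δ → |f q - f q'| < ε)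
    (hlam0 : ∀ q ∈ Omega, 0 < lam q)
    (hlamb : ∃ C : ℝ, ∀ q ∈ Omega, lam q ≤ C)
    (hlamu : ∀ ε > 0, ∃ δ > 0, ∀ q ∈ Omega, ∀ q' ∈ Omega, ‖q - q'‖ < δ →
      |lam q - lam q'| < ε)
    (hw0 : ∀ q ∈ Omega, 0 < w q) (hwb : ∃ C : ℝ, ∀ q ∈ Omega, w q ≤ C)
    (hE : ∀ q ∈ Omega, sqE lam q ⊆ Omega)
    (N : ℕ) (hN : 1 ≤ N) (p : ℝ) (hp : 1 ≤ p) :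
    ∀ ε > 0, ∃ δ > 0, ∀ D D' : Fin N → ℝ × ℝ,
      (∀ n, D n ∈ Omega) → (∀ n, D' n ∈ Omega) → Wp p D D' < δ →
      l2norm w (fun z => surf f lam D z - surf f lam D' z) < ε := by
  obtain ⟨C₀, hC₀⟩ := hfb
  obtain ⟨Cw₀, hCw₀⟩ := hwb
  obtain ⟨L₀, hL₀⟩ := hlamb
  set C : ℝ := |C₀| + 1 with hCdef
  set Cw : ℝ := |Cw₀| + 1 with hCwdef
  set L : ℝ := |L₀| + 1 with hLdef
  have hC1 : 1 ≤ C := le_add_of_nonneg_left (abs_nonneg _)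
  have hCw1 : 1 ≤ Cw := le_add_of_nonneg_left (abs_nonneg _)
  have hL1 : 1 ≤ L := le_add_of_nonneg_left (abs_nonneg _)
  have hCf : ∀ q ∈ Omega, |f q| ≤ C := fun q hq =>
    (hC₀ q hq).trans (by rw [hCdef]; linarith [le_abs_self C₀])
  have hCw' : ∀ q ∈ Omega, w q ≤ Cw := fun q hq =>
    (hCw₀ q hq).trans (by rw [hCwdef]; linarith [le_abs_self Cw₀])
  have hL' : ∀ q ∈ Omega, lam q ≤ L := fun q hq =>
    (hL₀ q hq).trans (by rw [hLdef]; linarith [le_abs_self L₀])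
  intro ε hε
  set K : ℝ := (N:ℝ)^2 * Cw with hKdef
  have hN1 : (1:ℝ) ≤ (N:ℝ) := by exact_mod_cast hN
  have hK1 : 1 ≤ K := by nlinarith
  set η : ℝ := min 1 (ε^2 / (16 * K * L^2)) with hηdef
  have hη0 : 0 < η := lt_min one_pos (by positivity)
  have hη1 : η ≤ 1 := min_le_left _ _
  set s : ℝ := min 1 (ε^2 / (16 * K * C^2 * (8*L + 16))) with hsdef
  have hs0 : 0 < s := lt_min one_pos (by positivity)
  have hs1 : s ≤ 1 := min_le_left _ _
  obtain ⟨δf, hδf0, hδf⟩ := hfu η hη0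
  obtain ⟨δl, hδl0, hδl⟩ := hlamu s hs0
  set δ : ℝ := min δf (min δl (s/2)) with hδdef
  have hδ0 : 0 < δ := lt_min hδf0 (lt_min hδl0 (by positivity))
  refine ⟨δ, hδ0, ?_⟩
  intro D D' hD hD' hW
  have hp0 : 0 < p := lt_of_lt_of_le one_pos hp
  -- extract a good permutation
  obtain ⟨σ, hσ⟩ : ∃ σ : Equiv.Perm (Fin N), (∑ n, ‖D n - D' (σ n)‖ ^ p) ^ (1/p) < δ := by
    by_contra hcon
    push_neg at hcon
    exact absurd hW (not_lt.mpr (le_ciInf hcon))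
  set Q : Fin N → ℝ × ℝ := fun n => D' (σ n) with hQdef
  have hQΩ : ∀ n, Q n ∈ Omega := fun n => hD' (σ n)
  have hsumnn : 0 ≤ ∑ n, ‖D n - Q n‖ ^ p :=
    Finset.sum_nonneg fun n _ => Real.rpow_nonneg (norm_nonneg _) p
  have hsum : ∑ n, ‖D n - Q n‖ ^ p < δ ^ p := by
    have h1 := Real.rpow_lt_rpow (Real.rpow_nonneg hsumnn (1/p)) hσ hp0
    rwa [← Real.rpow_mul hsumnn, one_div_mul_cancel (ne_of_gt hp0), Real.rpow_one] at h1
  have hd : ∀ n, ‖D n - Q n‖ < δ := by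
    intro n
    by_contra hcon
    push_neg at hcon
    have h1 : δ ^ p ≤ ‖D n - Q n‖ ^ p := Real.rpow_le_rpow (le_of_lt hδ0) hcon (le_of_lt hp0)
    have h2 : ‖D n - Q n‖ ^ p ≤ ∑ m, ‖D m - Q m‖ ^ p :=
      Finset.single_le_sum (f := fun m => ‖D m - Q m‖ ^ p)
        (fun m _ => Real.rpow_nonneg (norm_nonneg _) p) (Finset.mem_univ n)
    linarith
  have hd1 : ∀ n, |(D n).1 - (Q n).1| < δ := by
    intro n
    have h1 : ‖(D n - Q n).1‖ ≤ ‖D n - Q n‖ := norm_fst_le _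
    have h2 : (D n - Q n).1 = (D n).1 - (Q n).1 := rfl
    rw [h2, Real.norm_eq_abs] at h1
    exact lt_of_le_of_lt h1 (hd n)
  have hd2 : ∀ n, |(D n).2 - (Q n).2| < δ := by
    intro n
    have h1 : ‖(D n - Q n).2‖ ≤ ‖D n - Q n‖ := norm_snd_le _
    have h2 : (D n - Q n).2 = (D n).2 - (Q n).2 := rfl
    rw [h2, Real.norm_eq_abs] at h1
    exact lt_of_le_of_lt h1 (hd n)
  have hδs : δ ≤ s/2 := le_trans (min_le_right _ _) (min_le_right _ _)
  have hlams : ∀ n, |lam (D n) - lam (Q n)| < s := fun n =>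
    hδl (D n) (hD n) (Q n) (hQΩ n) (lt_of_lt_of_le (hd n) (le_trans (min_le_right _ _) (min_le_left _ _)))
  have hfs : ∀ n, |f (D n) - f (Q n)| < η := fun n =>
    hδf (D n) (hD n) (Q n) (hQΩ n) (lt_of_lt_of_le (hd n) (min_le_left _ _))
  -- sets
  set A : Fin N → Set (ℝ×ℝ) := fun n => sqE lam (D n) with hAdef
  set B : Fin N → Set (ℝ×ℝ) := fun n => sqE lam (Q n) with hBdef
  set Oo : Fin N → Set (ℝ×ℝ) := fun n => sqr (lam (D n) + 2*s) (D n) with hOodef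
  set Ii : Fin N → Set (ℝ×ℝ) := fun n => sqr (lam (D n) - 2*s) (D n) with hIidef
  set S : Fin N → Set (ℝ×ℝ) := fun n => Oo n \ Ii n with hSdef
  have hAO : ∀ n, A n ⊆ Oo n := by
    intro n
    exact sqr_subset (by linarith [hs0]) (by linarith [hs0]) (by linarith [hs0]) (by linarith [hs0])
  have hIA : ∀ n, Ii n ⊆ A n := by
    intro n
    exact sqr_subset (by linarith [hs0]) (by linarith [hs0]) (by linarith [hs0]) (by linarith [hs0])
  have hBO : ∀ n, B n ⊆ Oo n := by
    intro n
    have h1 := abs_lt.mp (hd1 n); have h2 := abs_lt.mp (hd2 n); have h3 := abs_lt.mp (hlams n)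
    exact sqr_subset (by simp only [hQdef]; linarith) (by simp only [hQdef]; linarith)
      (by simp only [hQdef]; linarith) (by simp only [hQdef]; linarith)
  have hIB : ∀ n, Ii n ⊆ B n := by
    intro n
    have h1 := abs_lt.mp (hd1 n); have h2 := abs_lt.mp (hd2 n); have h3 := abs_lt.mp (hlams n)
    exact sqr_subset (by simp only [hQdef]; linarith) (by simp only [hQdef]; linarith)
      (by simp only [hQdef]; linarith) (by simp only [hQdef]; linarith)
  have hIO : ∀ n, Ii n ⊆ Oo n := fun n => (hIA n).trans (hAO n)
  -- pointwise bound per n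
  have hptn : ∀ n (z : ℝ×ℝ),
      |f (D n) * Set.indicator (A n) (1:(ℝ×ℝ)→ℝ) z - f (Q n) * Set.indicator (B n) (1:(ℝ×ℝ)→ℝ) z|
      ≤ η * Set.indicator (A n) (1:(ℝ×ℝ)→ℝ) z + C * Set.indicator (S n) (1:(ℝ×ℝ)→ℝ) z := by
    intro n z
    have hSnn : (0:ℝ) ≤ Set.indicator (S n) (1:(ℝ×ℝ)→ℝ) z := ind_nonneg _ _
    by_cases hA : z ∈ A n <;> by_cases hB : z ∈ B n
    · rw [Set.indicator_of_mem hA, Set.indicator_of_mem hB]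
      simp only [Pi.one_apply, mul_one]
      have h1 := hfs n
      have h2 : 0 ≤ C * Set.indicator (S n) (1:(ℝ×ℝ)→ℝ) z := mul_nonneg (by linarith) hSnn
      rw [abs_lt] at h1
      rw [abs_le]; constructor <;> linarith
    · have hzS : z ∈ S n := ⟨hAO n hA, fun h => hB (hIB n h)⟩
      rw [Set.indicator_of_mem hA, Set.indicator_of_notMem hB, Set.indicator_of_mem hzS]
      simp only [Pi.one_apply, mul_one, mul_zero, sub_zero]
      have := hCf (D n) (hD n)
      linarith [le_of_lt hη0]
    · have hzS : z ∈ S n := ⟨hBO n hB, fun h => hA (hIA n h)⟩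
      rw [Set.indicator_of_notMem hA, Set.indicator_of_mem hB, Set.indicator_of_mem hzS]
      simp only [Pi.one_apply, mul_one, mul_zero, zero_sub, abs_neg]
      have := hCf (Q n) (hQΩ n)
      linarith
    · rw [Set.indicator_of_notMem hA, Set.indicator_of_notMem hB]
      simp only [mul_zero, sub_zero, abs_zero]
      have h2 : 0 ≤ C * Set.indicator (S n) (1:(ℝ×ℝ)→ℝ) z := mul_nonneg (by linarith) hSnn
      linarith [mul_nonneg (le_of_lt hη0) (ind_nonneg (A n) z)]
  -- rewrite surf D'
  have hsurf' : ∀ z, surf f lam D' z = ∑ n, f (Q n) * Set.indicator (B n) (1:(ℝ×ℝ)→ℝ) z := by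
    intro z
    rw [surf]
    exact (Equiv.sum_comp σ fun m => f (D' m) * Set.indicator (sqE lam (D' m)) 1 z).symm
  -- quadratic pointwise bound
  have hgb : ∀ z, (surf f lam D z - surf f lam D' z)^2
      ≤ (N:ℝ) * ∑ n, (2*η^2 * Set.indicator (A n) (1:(ℝ×ℝ)→ℝ) z
          + 2*C^2 * Set.indicator (S n) (1:(ℝ×ℝ)→ℝ) z) := by
    intro z
    have h1 : |surf f lam D z - surf f lam D' z|
        ≤ ∑ n, (η * Set.indicator (A n) (1:(ℝ×ℝ)→ℝ) z + C * Set.indicator (S n) (1:(ℝ×ℝ)→ℝ) z) := by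
      rw [hsurf' z, surf, ← Finset.sum_sub_distrib]
      exact (Finset.abs_sum_le_sum_abs _ _).trans (Finset.sum_le_sum fun n _ => hptn n z)
    have h2 : (surf f lam D z - surf f lam D' z)^2
        ≤ (∑ n, (η * Set.indicator (A n) (1:(ℝ×ℝ)→ℝ) z + C * Set.indicator (S n) (1:(ℝ×ℝ)→ℝ) z))^2 := by
      rw [← sq_abs]
      exact pow_le_pow_left₀ (abs_nonneg _) h1 2
    have h3 := sq_sum_le_card_mul_sum_sq (s := Finset.univ)
      (f := fun n => η * Set.indicator (A n) (1:(ℝ×ℝ)→ℝ) z + C * Set.indicator (S n) (1:(ℝ×ℝ)→ℝ) z)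
    have h4 : ∀ n, (η * Set.indicator (A n) (1:(ℝ×ℝ)→ℝ) z + C * Set.indicator (S n) (1:(ℝ×ℝ)→ℝ) z)^2
        ≤ 2*η^2 * Set.indicator (A n) (1:(ℝ×ℝ)→ℝ) z + 2*C^2 * Set.indicator (S n) (1:(ℝ×ℝ)→ℝ) z := by
      intro n
      rcases ind01 (A n) z with hx | hx <;> rcases ind01 (S n) z with hy | hy <;>
        rw [hx, hy] <;> nlinarith [sq_nonneg (η - C), sq_nonneg η, sq_nonneg C]
    calc (surf f lam D z - surf f lam D' z)^2
        ≤ (∑ n, (η * Set.indicator (A n) (1:(ℝ×ℝ)→ℝ) z + C * Set.indicator (S n) (1:(ℝ×ℝ)→ℝ) z))^2 := h2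
      _ ≤ (Finset.univ.card : ℝ) * ∑ n, (η * Set.indicator (A n) (1:(ℝ×ℝ)→ℝ) z
            + C * Set.indicator (S n) (1:(ℝ×ℝ)→ℝ) z)^2 := by exact_mod_cast h3
      _ ≤ (N:ℝ) * ∑ n, (2*η^2 * Set.indicator (A n) (1:(ℝ×ℝ)→ℝ) z
            + 2*C^2 * Set.indicator (S n) (1:(ℝ×ℝ)→ℝ) z) := by
          rw [Finset.card_univ, Fintype.card_fin]
          exact mul_le_mul_of_nonneg_left (Finset.sum_le_sum fun n _ => h4 n) (by positivity)
    -- dominating function G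
  set G : (ℝ×ℝ) → ℝ := fun z => (N:ℝ) * Cw * ∑ n, (2*η^2 * Set.indicator (A n) (1:(ℝ×ℝ)→ℝ) z
      + 2*C^2 * Set.indicator (S n) (1:(ℝ×ℝ)→ℝ) z) with hGdef
  have hmeasS : ∀ n, MeasurableSet (S n) := fun n => (sqr_meas _ _).diff (sqr_meas _ _)
  have hvolS : ∀ n, volume (S n) < ⊤ := fun n =>
    lt_of_le_of_lt (measure_mono Set.diff_subset) (sqr_vol_top _ _)
  have hmeasA : ∀ n, MeasurableSet (A n) := fun n => sqr_meas _ _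
  have hvolAtop : ∀ n, volume (A n) < ⊤ := fun n => sqr_vol_top _ _
  have hmeasO : ∀ n, MeasurableSet (Oo n) := fun n => sqr_meas _ _
  have hvolOtop : ∀ n, volume (Oo n) < ⊤ := fun n => sqr_vol_top _ _
  have hmeasI : ∀ n, MeasurableSet (Ii n) := fun n => sqr_meas _ _
  have hvolItop : ∀ n, volume (Ii n) < ⊤ := fun n => sqr_vol_top _ _
  have hIntn : ∀ n, Integrable (fun z => 2*η^2 * Set.indicator (A n) (1:(ℝ×ℝ)→ℝ) z
      + 2*C^2 * Set.indicator (S n) (1:(ℝ×ℝ)→ℝ) z) volume := fun n =>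
    ((integrable_ind (hmeasA n) (hvolAtop n)).const_mul _).add
      ((integrable_ind (hmeasS n) (hvolS n)).const_mul _)
  have hGint : Integrable G volume :=
    (integrable_finset_sum Finset.univ (fun n _ => hIntn n)).const_mul _
  have hGnn : ∀ z, 0 ≤ G z := fun z => mul_nonneg (by positivity)
    (Finset.sum_nonneg fun n _ => add_nonneg (mul_nonneg (by positivity) (ind_nonneg _ _))
      (mul_nonneg (by positivity) (ind_nonneg _ _)))
  have hGb2 : ∀ z ∈ Omega, (surf f lam D z - surf f lam D' z)^2 * w z ≤ G z := by
    intro z hz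
    have h1 : (surf f lam D z - surf f lam D' z)^2 * w z
        ≤ (surf f lam D z - surf f lam D' z)^2 * Cw :=
      mul_le_mul_of_nonneg_left (hCw' z hz) (sq_nonneg _)
    have h2 := mul_le_mul_of_nonneg_right (hgb z) (le_trans zero_le_one hCw1)
    calc (surf f lam D z - surf f lam D' z)^2 * w z
        ≤ (surf f lam D z - surf f lam D' z)^2 * Cw := h1
      _ ≤ ((N:ℝ) * ∑ n, (2*η^2 * Set.indicator (A n) (1:(ℝ×ℝ)→ℝ) z
            + 2*C^2 * Set.indicator (S n) (1:(ℝ×ℝ)→ℝ) z)) * Cw := h2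
      _ = G z := by simp only [hGdef]; ring
  have hInt1 : ∫ z in Omega, (surf f lam D z - surf f lam D' z)^2 * w z ≤ ∫ z in Omega, G z := by
    refine integral_mono_of_nonneg ?_ (hGint.restrict) ?_
    · exact ae_restrict_of_forall_mem measOmega
        (fun z hz => mul_nonneg (sq_nonneg _) (le_of_lt (hw0 z hz)))
    · exact ae_restrict_of_forall_mem measOmega hGb2
  have hInt2 : ∫ z in Omega, G z ≤ ∫ z, G z :=
    setIntegral_le_integral hGint (Filter.Eventually.of_forall hGnn)
  have hIndS : ∀ n, ∫ z, Set.indicator (S n) (1:(ℝ×ℝ)→ℝ) z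
      = (volume (Oo n)).toReal - (volume (Ii n)).toReal := by
    intro n
    have h1 : (fun z => Set.indicator (S n) (1:(ℝ×ℝ)→ℝ) z)
        = fun z => Set.indicator (Oo n) (1:(ℝ×ℝ)→ℝ) z - Set.indicator (Ii n) (1:(ℝ×ℝ)→ℝ) z :=
      funext (ind_diff (hIO n))
    rw [h1, integral_sub (integrable_ind (hmeasO n) (hvolOtop n))
        (integrable_ind (hmeasI n) (hvolItop n)),
      integral_ind (hmeasO n), integral_ind (hmeasI n)]
  have hIntG : ∫ z, G z = (N:ℝ) * Cw * ∑ n, (2*η^2 * (volume (A n)).toReal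
      + 2*C^2 * ((volume (Oo n)).toReal - (volume (Ii n)).toReal)) := by
    simp only [hGdef]
    rw [integral_const_mul, integral_finset_sum Finset.univ (fun n _ => hIntn n)]
    congr 1
    refine Finset.sum_congr rfl (fun n _ => ?_)
    rw [integral_add ((integrable_ind (hmeasA n) (hvolAtop n)).const_mul _)
        ((integrable_ind (hmeasS n) (hvolS n)).const_mul _),
      integral_const_mul, integral_const_mul, integral_ind (hmeasA n), hIndS n]
  have hvolA : ∀ n, (volume (A n)).toReal ≤ L^2 := by
    intro n
    have he : (volume (A n)).toReal = max (lam (D n)) 0 ^ 2 := by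
      simp only [hAdef, sqE]; exact sqr_vol _ _
    rw [he]
    have h0 := hlam0 (D n) (hD n); have h1 := hL' (D n) (hD n)
    rw [max_eq_left (le_of_lt h0)]
    nlinarith
  have hvolOI : ∀ n, (volume (Oo n)).toReal - (volume (Ii n)).toReal ≤ (8*L+16)*s := by
    intro n
    have he1 : (volume (Oo n)).toReal = max (lam (D n) + 2*s) 0 ^ 2 := by
      simp only [hOodef]; exact sqr_vol _ _
    have he2 : (volume (Ii n)).toReal = max (lam (D n) - 2*s) 0 ^ 2 := by
      simp only [hIidef]; exact sqr_vol _ _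
    rw [he1, he2]
    have h0 := hlam0 (D n) (hD n); have h1 := hL' (D n) (hD n)
    rw [max_eq_left (by linarith : (0:ℝ) ≤ lam (D n) + 2*s)]
    have e4 : 0 ≤ L*s := mul_nonneg (by linarith) (le_of_lt hs0)
    have e5 : lam (D n) * s ≤ L * s := mul_le_mul_of_nonneg_right h1 (le_of_lt hs0)
    rcases le_total (lam (D n) - 2*s) 0 with h | h
    · rw [max_eq_right h]
      have e1 : lam (D n) + 2*s ≤ 4*s := by linarith
      have e2 : (lam (D n) + 2*s)^2 ≤ (4*s)^2 :=
        pow_le_pow_left₀ (by linarith) e1 2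
      have e3 : s*s ≤ s := by
        calc s*s ≤ s*1 := mul_le_mul_of_nonneg_left hs1 (le_of_lt hs0)
          _ = s := mul_one s
      linarith
    · rw [max_eq_left h]
      have e6 : (lam (D n) + 2*s)^2 - (lam (D n) - 2*s)^2 = 8*(lam (D n)*s) := by ring
      linarith
  have hsumb : ∑ n, (2*η^2 * (volume (A n)).toReal
        + 2*C^2 * ((volume (Oo n)).toReal - (volume (Ii n)).toReal))
      ≤ (N:ℝ) * (2*η^2*L^2 + 2*C^2*((8*L+16)*s)) := by
    calc ∑ n, (2*η^2 * (volume (A n)).toReal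
          + 2*C^2 * ((volume (Oo n)).toReal - (volume (Ii n)).toReal))
        ≤ ∑ _n : Fin N, (2*η^2*L^2 + 2*C^2*((8*L+16)*s)) :=
          Finset.sum_le_sum (fun n _ => add_le_add
            (mul_le_mul_of_nonneg_left (hvolA n) (by positivity))
            (mul_le_mul_of_nonneg_left (hvolOI n) (by positivity)))
      _ = (N:ℝ) * (2*η^2*L^2 + 2*C^2*((8*L+16)*s)) := by
          rw [Finset.sum_const, Finset.card_univ, Fintype.card_fin, nsmul_eq_mul]
  clear_value C Cw L K η s δ Q A B Oo Ii S G
  have hKpos : (0:ℝ) < K := lt_of_lt_of_le one_pos hK1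
  have hLpos : (0:ℝ) < L := lt_of_lt_of_le one_pos hL1
  have hCpos : (0:ℝ) < C := lt_of_lt_of_le one_pos hC1
  have hCwpos : (0:ℝ) < Cw := lt_of_lt_of_le one_pos hCw1
  have hc1 : (0:ℝ) < 16*K*L^2 :=
    mul_pos (mul_pos (by norm_num) hKpos) (pow_pos hLpos 2)
  have hc2 : (0:ℝ) < 16*K*C^2*(8*L+16) :=
    mul_pos (mul_pos (mul_pos (by norm_num) hKpos) (pow_pos hCpos 2)) (by linarith)
  have hηle : η ≤ ε^2 / (16*K*L^2) := by rw [hηdef]; exact min_le_right _ _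
  have hsle : s ≤ ε^2 / (16*K*C^2*(8*L+16)) := by rw [hsdef]; exact min_le_right _ _
  have hη2' : η * (16*K*L^2) ≤ ε^2 := by
    have h := mul_le_mul_of_nonneg_right hηle (le_of_lt hc1)
    rwa [div_mul_cancel₀ _ (ne_of_gt hc1)] at h
  have hs2' : s * (16*K*C^2*(8*L+16)) ≤ ε^2 := by
    have h := mul_le_mul_of_nonneg_right hsle (le_of_lt hc2)
    rwa [div_mul_cancel₀ _ (ne_of_gt hc2)] at h
  have hηsq : η^2 ≤ η := by
    have h := mul_le_mul_of_nonneg_left hη1 (le_of_lt hη0)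
    calc η^2 = η * η := sq η
      _ ≤ η * 1 := h
      _ = η := mul_one η
  have hfin : ∫ z in Omega, (surf f lam D z - surf f lam D' z)^2 * w z ≤ ε^2/4 := by
    have t1 : K*(2*η^2*L^2) ≤ ε^2/8 := by
      have h := mul_le_mul_of_nonneg_left hηsq
        (le_of_lt (mul_pos (mul_pos (by norm_num : (0:ℝ) < 2) hKpos) (pow_pos hLpos 2)))
      linarith [h, hη2']
    have t2 : K*(2*C^2*((8*L+16)*s)) ≤ ε^2/8 := by linarith [hs2']
    have key : (N:ℝ)*Cw*((N:ℝ) * (2*η^2*L^2 + 2*C^2*((8*L+16)*s))) ≤ ε^2/4 := by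
      have hKeq : (N:ℝ)*Cw*((N:ℝ) * (2*η^2*L^2 + 2*C^2*((8*L+16)*s)))
          = K*(2*η^2*L^2) + K*(2*C^2*((8*L+16)*s)) := by rw [hKdef]; ring
      rw [hKeq]
      linarith [t1, t2]
    calc ∫ z in Omega, (surf f lam D z - surf f lam D' z)^2 * w z
        ≤ ∫ z in Omega, G z := hInt1
      _ ≤ ∫ z, G z := hInt2
      _ = (N:ℝ) * Cw * ∑ n, (2*η^2 * (volume (A n)).toReal
            + 2*C^2 * ((volume (Oo n)).toReal - (volume (Ii n)).toReal)) := hIntG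
      _ ≤ (N:ℝ) * Cw * ((N:ℝ) * (2*η^2*L^2 + 2*C^2*((8*L+16)*s))) :=
          mul_le_mul_of_nonneg_left hsumb
            (mul_nonneg (Nat.cast_nonneg N) (le_of_lt hCwpos))
      _ ≤ ε^2/4 := key
  show Real.sqrt (∫ z in Omega, (surf f lam D z - surf f lam D' z)^2 * w z) < ε
  calc Real.sqrt (∫ z in Omega, (surf f lam D z - surf f lam D' z)^2 * w z)
      ≤ Real.sqrt (ε^2/4) := Real.sqrt_le_sqrt hfin
    _ < ε := by
        rw [show ε^2/4 = (ε/2)^2 by ring, Real.sqrt_sq (by linarith)]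
        linarith
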